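/- Let G be a simple graph on n vertices with walk matrix W = [e, Ae, A²e, …, A^{n−1}e]. Then 2^⌊n/2⌋ divides det(W); equivalently, in the prime factorization det(W) = ±2^α·p₁^{α₁}⋯p_s^{α_s} of a nonzero det(W), the exponent α of 2 satisfies α ≥ ⌊n/2⌋. -/

import Mathlib

open Matrix

open scoped Classical in
/-- The (0,1)-adjacency matrix of a simple graph on `Fin n`, with entries in `R`. -/
noncomputable def adjMat {n : ℕ} (R : Type*) [Zero R] [One R] (G : SimpleGraph (Fin n)) :
    Matrix (Fin n) (Fin n) R :=
  Matrix.of fun i j => if G.Adj i j then 1 else 0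

/-- The walk matrix `W = [e, Ae, A²e, …, A^{n−1}e]` of a square matrix `A`,
where `e` is the all-ones vector: the `j`-th column is `A^j e`. -/
noncomputable def walkMatrix {R : Type*} [CommRing R] {n : ℕ} (A : Matrix (Fin n) (Fin n) R) :
    Matrix (Fin n) (Fin n) R :=
  Matrix.of fun i j => (A ^ (j : ℕ) *ᵥ fun _ => 1) i

set_option maxHeartbeats 1000000

section WalkAux

section DotForm
variable {K : Type*} [Field K] {n : ℕ}

/-- The standard dot-product bilinear form on `Fin n → K`. -/
noncomputable def dotForm (K : Type*) [Field K] (n : ℕ) :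
    LinearMap.BilinForm K (Fin n → K) :=
  LinearMap.mk₂ K (fun x y => x ⬝ᵥ y)
    (fun x x' y => add_dotProduct x x' y)
    (fun c x y => smul_dotProduct c x y)
    (fun x y y' => dotProduct_add x y y')
    (fun c x y => dotProduct_smul c x y)

@[simp] lemma dotForm_apply (x y : Fin n → K) : dotForm K n x y = x ⬝ᵥ y := rfl

lemma dotForm_isRefl : (dotForm K n).IsRefl := by
  intro x y h
  simpa [dotProduct_comm] using h

lemma dotForm_nondegenerate : (dotForm K n).Nondegenerate := by
  refine (LinearMap.IsRefl.nondegenerate_iff_separatingLeft (B := dotForm K n)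
    (fun x y h => dotForm_isRefl x y h)).mpr ?_
  intro x hx
  funext i
  have := hx (Pi.single i 1)
  simpa [dotProduct_single] using this

lemma bilin_span_zero {V : Type*} [AddCommGroup V] [Module K V]
    (Φ : LinearMap.BilinForm K V) (S T : Set V)
    (h : ∀ x ∈ S, ∀ y ∈ T, Φ x y = 0) :
    ∀ x ∈ Submodule.span K S, ∀ y ∈ Submodule.span K T, Φ x y = 0 := by
  intro x hx y hy
  have h1 : ∀ s ∈ S, y ∈ LinearMap.ker (Φ s) := fun s hs =>
    Submodule.span_le.2 (fun t ht => LinearMap.mem_ker.2 (h s hs t ht)) hy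
  have h2 : x ∈ LinearMap.ker (Φ.flip y) :=
    Submodule.span_le.2 (fun s hs => LinearMap.mem_ker.2 (by simpa using h1 s hs)) hx
  simpa using h2

lemma two_finrank_le_of_le_orthogonal {V : Type*} [AddCommGroup V] [Module K V]
    [FiniteDimensional K V] {B : LinearMap.BilinForm K V} (hB : B.Nondegenerate)
    (hr : B.IsRefl) (U : Submodule K V) (h : U ≤ B.orthogonal U) :
    2 * Module.finrank K U ≤ Module.finrank K V := by
  have h1 := LinearMap.BilinForm.finrank_orthogonal hB U
  have h2 : Module.finrank K U ≤ Module.finrank K (B.orthogonal U) :=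
    Submodule.finrank_mono h
  have h3 : Module.finrank K U ≤ Module.finrank K V := Submodule.finrank_le U
  omega

end DotForm

section SSeq
variable {n : ℕ} (A : Matrix (Fin n) (Fin n) (ZMod 2))

/-- number of walks of length m, mod 2 -/
noncomputable def wcount (m : ℕ) : ZMod 2 :=
  (fun _ => (1 : ZMod 2)) ⬝ᵥ ((A ^ m) *ᵥ fun _ => 1)

lemma pow_symm (hsym : Aᵀ = A) (m : ℕ) : (A ^ m)ᵀ = A ^ m := by
  rw [transpose_pow, hsym]

lemma pair_eq_wcount (hsym : Aᵀ = A) (a b : ℕ) :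
    ((A ^ a) *ᵥ fun _ => (1:ZMod 2)) ⬝ᵥ ((A ^ b) *ᵥ fun _ => 1) = wcount A (a + b) := by
  have h1 : (A ^ a) *ᵥ (fun _ => (1:ZMod 2)) = (fun _ => (1:ZMod 2)) ᵥ* (A ^ a) := by
    rw [← mulVec_transpose, pow_symm A hsym a]
  rw [h1, ← dotProduct_mulVec, mulVec_mulVec, ← pow_add]
  rfl

lemma wcount_double (hsym : Aᵀ = A) (k : ℕ) : wcount A (2 * k) = wcount A k := by
  have h := pair_eq_wcount A hsym k k
  rw [← two_mul] at h
  rw [← h]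
  have h0 := pair_eq_wcount A hsym 0 k
  rw [zero_add, pow_zero, one_mulVec] at h0
  rw [← h0]
  simp only [dotProduct]
  refine Finset.sum_congr rfl fun i _ => ?_
  have : ∀ x : ZMod 2, x * x = x := by decide
  rw [this, one_mul]

lemma wcount_odd (hsym : Aᵀ = A) (hdiag : ∀ i, A i i = 0) (k : ℕ) : wcount A (2 * k + 1) = 0 := by
  have h := pair_eq_wcount A hsym k (k + 1)
  have hm : k + (k + 1) = 2 * k + 1 := by ring
  rw [hm] at h
  rw [← h]
  set y := (A ^ k) *ᵥ (fun _ => (1:ZMod 2)) with hy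
  have h2 : (A ^ (k+1)) *ᵥ (fun _ => (1:ZMod 2)) = A *ᵥ y := by
    rw [hy, mulVec_mulVec, ← pow_succ']
  rw [h2]
  have expand : y ⬝ᵥ (A *ᵥ y) = ∑ p : Fin n × Fin n, y p.1 * A p.1 p.2 * y p.2 := by
    rw [← Finset.univ_product_univ, Finset.sum_product]
    simp only [dotProduct, mulVec, dotProduct, Finset.mul_sum]
    exact Finset.sum_congr rfl fun i _ => Finset.sum_congr rfl fun j _ => by ring
  rw [expand]
  refine Finset.sum_ninvolution (fun p => (p.2, p.1)) ?_ ?_ (fun _ => Finset.mem_univ _) ?_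
  · intro p
    have hAsym : A p.2 p.1 = A p.1 p.2 := by
      conv_lhs => rw [← hsym]
      rfl
    have : ∀ x : ZMod 2, x + x = 0 := by decide
    calc y p.1 * A p.1 p.2 * y p.2 + y p.2 * A p.2 p.1 * y p.1
        = y p.1 * A p.1 p.2 * y p.2 + y p.1 * A p.1 p.2 * y p.2 := by rw [hAsym]; ring
      _ = 0 := this _
  · intro p hp
    intro hcontra
    apply hp
    have h1 : p.2 = p.1 := congrArg Prod.fst hcontra
    rw [h1, hdiag]
    ring
  · intro p; rfl

lemma wcount_pos (hsym : Aᵀ = A) (hdiag : ∀ i, A i i = 0) (m : ℕ) (hm : 1 ≤ m) : wcount A m = 0 := by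
  induction m using Nat.strong_induction_on with
  | _ m ih =>
    rcases Nat.even_or_odd m with ⟨k, hk⟩ | ⟨k, hk⟩
    · have hk' : m = 2 * k := by omega
      subst hk'
      have hk1 : 1 ≤ k := by omega
      rw [wcount_double A hsym]
      exact ih k (by omega) hk1
    · subst hk
      exact wcount_odd A hsym hdiag k

lemma wcount_zero : wcount A 0 = (n : ZMod 2) := by
  simp [wcount, dotProduct]

end SSeq


private lemma arith0 (a b n : ℕ) (h : a + b = n) (ha : a ≤ n - n / 2) : n / 2 ≤ b := by omega
private lemma arith1 (a c n : ℕ) (h2c : 2 * c ≤ n) (hodd : n % 2 = 1) (h1 : a ≤ c + 1) :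
    a ≤ n - n / 2 := by omega
private lemma arith2 (a n : ℕ) (h : 2 * a ≤ n) : a ≤ n - n / 2 := by omega
private lemma arith4 (a u s i t n : ℕ) (h1 : a ≤ t) (hs : t + i = u + s) (h2 : s ≤ 1)
    (hu : 2 * u ≤ n) (ho : n % 2 = 1) : a ≤ n - n / 2 := by omega

section Rank
variable {n : ℕ} (A : Matrix (Fin n) (Fin n) (ZMod 2))

lemma rank_bound (hn : n ≠ 0) (hsym : Aᵀ = A) (hdiag : ∀ i, A i i = 0)
    (hw : ∀ m, 1 ≤ m → ((fun _ => (1:ZMod 2)) ⬝ᵥ ((A ^ m) *ᵥ fun _ => 1)) = 0)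
    (hw0 : ((fun _ => (1:ZMod 2)) ⬝ᵥ ((A ^ 0) *ᵥ fun _ => 1)) = (n : ZMod 2))
    (hpair : ∀ a b : ℕ, ((A ^ a) *ᵥ fun _ => (1:ZMod 2)) ⬝ᵥ ((A ^ b) *ᵥ fun _ => 1)
      = (fun _ => (1:ZMod 2)) ⬝ᵥ ((A ^ (a+b)) *ᵥ fun _ => 1)) :
    n / 2 ≤ Module.finrank (ZMod 2) (LinearMap.ker (walkMatrix A).mulVecLin) := by
  haveI : NeZero n := ⟨hn⟩
  have hBt : (walkMatrix A)ᵀ = fun j : Fin n => (A ^ (j : ℕ)) *ᵥ fun _ => (1:ZMod 2) := by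
    funext j i
    rfl
  -- pairing of columns
  have hpairc : ∀ j1 j2 : Fin n, (j1 : ℕ) + (j2 : ℕ) ≠ 0 →
      dotForm (ZMod 2) n ((A ^ ((j1 : ℕ))) *ᵥ fun _ => 1) ((A ^ ((j2 : ℕ))) *ᵥ fun _ => 1) = 0 := by
    intro j1 j2 hne
    show (((A ^ ((j1:ℕ))) *ᵥ fun _ => (1:ZMod 2)) ⬝ᵥ ((A ^ ((j2:ℕ))) *ᵥ fun _ => 1)) = 0
    rw [hpair]
    exact hw _ (by omega)
  have hfr : Module.finrank (ZMod 2) (Fin n → ZMod 2) = n := Module.finrank_fin_fun _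
  -- rank-nullity
  have hrn := LinearMap.finrank_range_add_finrank_ker (walkMatrix A).mulVecLin
  rw [(walkMatrix A).range_mulVecLin, show (walkMatrix A).col = _ from hBt, hfr] at hrn
  refine arith0 _ _ _ hrn ?_
  have hval : ∀ j : Fin n, j ≠ 0 → (j : ℕ) ≠ 0 := by
    intro j hj h0
    exact hj (Fin.ext (by simpa using h0))
  -- the span of the columns with index ≠ 0 is self-orthogonal
  have hU0orth : Submodule.span (ZMod 2)
        ((fun j : Fin n => (A ^ ((j:ℕ))) *ᵥ fun _ => (1:ZMod 2)) '' {j | j ≠ 0}) ≤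
      (dotForm (ZMod 2) n).orthogonal (Submodule.span (ZMod 2)
        ((fun j : Fin n => (A ^ ((j:ℕ))) *ᵥ fun _ => (1:ZMod 2)) '' {j | j ≠ 0})) := by
    intro x hx
    rw [LinearMap.BilinForm.mem_orthogonal_iff]
    intro y hy
    refine bilin_span_zero (dotForm (ZMod 2) n) _ _ ?_ y hy x hx
    rintro a ⟨j1, hj1, rfl⟩ b ⟨j2, hj2, rfl⟩
    exact hpairc j1 j2 (by have := hval j1 hj1; omega)
  have hU0small := two_finrank_le_of_le_orthogonal dotForm_nondegenerate dotForm_isRefl _ hU0orth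
  rw [hfr] at hU0small
  rcases Nat.even_or_odd n with he | ho
  · -- n even : the whole column span is self-orthogonal
    have hn2 : (n : ZMod 2) = 0 := by
      obtain ⟨k, hk⟩ := he
      have h2 : (2 : ZMod 2) = 0 := rfl
      rw [hk]
      push_cast
      rw [show ((k:ZMod 2) + k) = 2 * k by ring, h2, zero_mul]
    have hUorth : Submodule.span (ZMod 2)
          (Set.range (fun j : Fin n => (A ^ ((j:ℕ))) *ᵥ fun _ => (1:ZMod 2))) ≤
        (dotForm (ZMod 2) n).orthogonal (Submodule.span (ZMod 2)
          (Set.range (fun j : Fin n => (A ^ ((j:ℕ))) *ᵥ fun _ => (1:ZMod 2)))) := by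
      intro x hx
      rw [LinearMap.BilinForm.mem_orthogonal_iff]
      intro y hy
      refine bilin_span_zero (dotForm (ZMod 2) n) _ _ ?_ y hy x hx
      rintro a ⟨j1, rfl⟩ b ⟨j2, rfl⟩
      by_cases hz : (j1 : ℕ) + (j2 : ℕ) = 0
      · show (((A ^ ((j1:ℕ))) *ᵥ fun _ => (1:ZMod 2)) ⬝ᵥ ((A ^ ((j2:ℕ))) *ᵥ fun _ => 1)) = 0
        rw [hpair]
        rw [hz]
        exact hw0.trans hn2
      · exact hpairc j1 j2 hz
    have h2 := two_finrank_le_of_le_orthogonal dotForm_nondegenerate dotForm_isRefl _ hUorth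
    rw [hfr] at h2
    exact arith2 _ _ h2
  · -- n odd
    have hsup : Submodule.span (ZMod 2)
          (Set.range (fun j : Fin n => (A ^ ((j:ℕ))) *ᵥ fun _ => (1:ZMod 2))) ≤
        (Submodule.span (ZMod 2)
          ((fun j : Fin n => (A ^ ((j:ℕ))) *ᵥ fun _ => (1:ZMod 2)) '' {j | j ≠ 0})) ⊔
        Submodule.span (ZMod 2) {(fun j : Fin n => (A ^ ((j:ℕ))) *ᵥ fun _ => (1:ZMod 2)) 0} := by
      rw [Submodule.span_le]
      rintro x ⟨j, rfl⟩
      by_cases hj : j = 0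
      · subst hj
        exact Submodule.mem_sup_right (Submodule.subset_span rfl)
      · exact Submodule.mem_sup_left (Submodule.subset_span ⟨j, hj, rfl⟩)
    have h1 := Submodule.finrank_mono hsup
    have hs := Submodule.finrank_sup_add_finrank_inf_eq
      (Submodule.span (ZMod 2)
        ((fun j : Fin n => (A ^ ((j:ℕ))) *ᵥ fun _ => (1:ZMod 2)) '' {j | j ≠ 0}))
      (Submodule.span (ZMod 2) {(fun j : Fin n => (A ^ ((j:ℕ))) *ᵥ fun _ => (1:ZMod 2)) 0})
    have h2 : Module.finrank (ZMod 2) (Submodule.span (ZMod 2)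
        {(fun j : Fin n => (A ^ ((j:ℕ))) *ᵥ fun _ => (1:ZMod 2)) 0}) ≤ 1 := by
      have := finrank_span_le_card (R := ZMod 2)
        ({(fun j : Fin n => (A ^ ((j:ℕ))) *ᵥ fun _ => (1:ZMod 2)) 0} : Set (Fin n → ZMod 2))
      simpa using this
    exact arith4 _ _ _ _ _ _ h1 hs h2 hU0small (Nat.odd_iff.mp ho)
end Rank


lemma key_dvd {n : ℕ} : ∀ (k : ℕ) (W : Matrix (Fin n) (Fin n) ℤ),
    k ≤ Module.finrank (ZMod 2)
        (LinearMap.ker (Matrix.mulVecLin (W.map (Int.cast : ℤ → ZMod 2)))) →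
    (2 : ℤ) ^ k ∣ W.det := by
  intro k
  induction k with
  | zero => exact fun W _ => by simp
  | succ k ih =>
    intro W hk
    have hne : LinearMap.ker (W.map (Int.cast : ℤ → ZMod 2)).mulVecLin ≠ ⊥ := by
      intro h
      rw [h, finrank_bot] at hk
      omega
    obtain ⟨v, hvmem, hvne⟩ := Submodule.exists_mem_ne_zero_of_ne_bot hne
    obtain ⟨j, hj⟩ := Function.ne_iff.mp hvne
    have hv1 : v j = 1 := by
      have : ∀ x : ZMod 2, x ≠ 0 → x = 1 := by decide
      exact this _ hj
    set v' : Fin n → ℤ := fun i => ((v i).val : ℤ) with hv'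
    have hcastv : ∀ i, ((v' i : ℤ) : ZMod 2) = v i := by
      intro i
      have : ∀ x : ZMod 2, ((x.val : ℤ) : ZMod 2) = x := by decide
      exact this _
    have hv'j : v' j = 1 := by
      rw [hv']
      simp only [hv1]
      rfl
    set u : Fin n → ℤ := W *ᵥ v' with hu
    have hker : (W.map (Int.cast : ℤ → ZMod 2)) *ᵥ v = 0 := hvmem
    have hdvd : ∀ i, (2:ℤ) ∣ u i := by
      intro i
      have hcast : ((u i : ℤ) : ZMod 2) = 0 := by
        rw [hu]
        have : (((W *ᵥ v') i : ℤ) : ZMod 2) = ((W.map (Int.cast : ℤ → ZMod 2)) *ᵥ v) i := by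
          simp only [mulVec, dotProduct, map_apply]
          push_cast
          exact Finset.sum_congr rfl fun t _ => by rw [hcastv]
        rw [this, hker]
        rfl
      exact (ZMod.intCast_zmod_eq_zero_iff_dvd (u i) 2).mp hcast
    -- replace column j by u : determinant unchanged
    have hdet1 : (W.updateCol j u).det = W.det := by
      have : u = fun i => ∑ t, v' t • W i t := by
        funext i
        rw [hu]
        simp [mulVec, dotProduct, mul_comm]
      rw [this]
      rw [det_updateCol_sum W j v']
      rw [hv'j, one_smul]
    -- halve column j
    set u2 : Fin n → ℤ := fun i => u i / 2 with hu2
    have hcol2 : u = (2:ℤ) • u2 := by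
      funext i
      rw [hu2]
      simp only [Pi.smul_apply, smul_eq_mul]
      exact (Int.mul_ediv_cancel' (hdvd i)).symm
    have hdet2 : (W.updateCol j u).det = 2 * (W.updateCol j u2).det := by
      rw [hcol2, det_updateCol_smul]
    -- kernel of the new matrix
    set W2 := W.updateCol j u2 with hW2
    have hker2 : k ≤ Module.finrank (ZMod 2)
        (LinearMap.ker (Matrix.mulVecLin (W2.map (Int.cast : ℤ → ZMod 2)))) := by
      set K := LinearMap.ker (Matrix.mulVecLin (W.map (Int.cast : ℤ → ZMod 2))) with hK
      set φ : K →ₗ[ZMod 2] ZMod 2 := (LinearMap.proj j).comp K.subtype with hφ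
      have hrk := LinearMap.finrank_range_add_finrank_ker φ
      have hrange : Module.finrank (ZMod 2) (LinearMap.range φ) ≤ 1 := by
        have h1 := Submodule.finrank_le (LinearMap.range φ)
        rwa [Module.finrank_self] at h1
      -- the image of ker φ in the ambient space is inside ker of W2 mod 2
      have hmap : (LinearMap.ker φ).map K.subtype ≤
          LinearMap.ker (Matrix.mulVecLin (W2.map (Int.cast : ℤ → ZMod 2))) := by
        rintro x ⟨y, hy, rfl⟩
        have hyj : (y : Fin n → ZMod 2) j = 0 := hy
        have hyK : (W.map (Int.cast : ℤ → ZMod 2)) *ᵥ (y : Fin n → ZMod 2) = 0 := y.2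
        rw [LinearMap.mem_ker]
        show (W2.map (Int.cast : ℤ → ZMod 2)) *ᵥ (y : Fin n → ZMod 2) = 0
        funext i
        have : ∀ t, (W2.map (Int.cast : ℤ → ZMod 2)) i t * (y : Fin n → ZMod 2) t
            = (W.map (Int.cast : ℤ → ZMod 2)) i t * (y : Fin n → ZMod 2) t := by
          intro t
          by_cases ht : t = j
          · subst ht
            rw [hyj, mul_zero, mul_zero]
          · rw [hW2]
            simp [map_apply, updateCol_apply, ht]
        calc ((W2.map (Int.cast : ℤ → ZMod 2)) *ᵥ (y : Fin n → ZMod 2)) i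
            = ∑ t, (W2.map (Int.cast : ℤ → ZMod 2)) i t * (y : Fin n → ZMod 2) t := rfl
          _ = ∑ t, (W.map (Int.cast : ℤ → ZMod 2)) i t * (y : Fin n → ZMod 2) t :=
              Finset.sum_congr rfl fun t _ => this t
          _ = ((W.map (Int.cast : ℤ → ZMod 2)) *ᵥ (y : Fin n → ZMod 2)) i := rfl
          _ = 0 := by rw [hyK]; rfl
      have hfm : Module.finrank (ZMod 2) ((LinearMap.ker φ).map K.subtype)
          = Module.finrank (ZMod 2) (LinearMap.ker φ) :=
        Submodule.finrank_map_subtype_eq K (LinearMap.ker φ)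
      have hmono := Submodule.finrank_mono hmap
      omega
    have := ih W2 hker2
    rw [← hdet1, hdet2, pow_succ]
    rw [mul_comm ((2:ℤ)^k) 2]
    exact mul_dvd_mul (dvd_refl 2) this

end WalkAux

theorem stmt_15 {n : ℕ} (G : SimpleGraph (Fin n))
    (W : Matrix (Fin n) (Fin n) ℤ) (hW : W = walkMatrix (adjMat ℤ G)) :
    (2 : ℤ) ^ (n / 2) ∣ W.det := by
  classical
  rcases Nat.eq_zero_or_pos n with h0 | hpos
  · subst h0
    simpa using one_dvd W.det
  have hn : n ≠ 0 := Nat.pos_iff_ne_zero.mp hpos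
  set A2 : Matrix (Fin n) (Fin n) (ZMod 2) := adjMat (ZMod 2) G with hA2
  have hsym : A2ᵀ = A2 := by
    funext i j
    show (if G.Adj j i then (1:ZMod 2) else 0) = (if G.Adj i j then 1 else 0)
    rw [SimpleGraph.adj_comm]
  have hdiag : ∀ i, A2 i i = 0 := by
    intro i
    show (if G.Adj i i then (1:ZMod 2) else 0) = 0
    simp [G.irrefl]
  -- the walk matrix mod 2
  have hmap : W.map (Int.cast : ℤ → ZMod 2) = walkMatrix A2 := by
    have hadj : (adjMat ℤ G).map (Int.cast : ℤ → ZMod 2) = A2 := by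
      funext i j
      show ((if G.Adj i j then (1:ℤ) else 0) : ℤ) = (if G.Adj i j then (1:ZMod 2) else 0)
      split <;> simp
    funext i j
    rw [hW]
    show (((walkMatrix (adjMat ℤ G)) i j : ℤ) : ZMod 2) = (A2 ^ (j:ℕ) *ᵥ fun _ => 1) i
    have hpow : ((adjMat ℤ G) ^ (j:ℕ)).map (Int.cast : ℤ → ZMod 2) = A2 ^ (j:ℕ) := by
      have h1 : (Int.castRingHom (ZMod 2)).mapMatrix ((adjMat ℤ G) ^ (j:ℕ))
          = ((Int.castRingHom (ZMod 2)).mapMatrix (adjMat ℤ G)) ^ (j:ℕ) :=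
        map_pow (Int.castRingHom (ZMod 2)).mapMatrix _ _
      rw [RingHom.mapMatrix_apply, RingHom.mapMatrix_apply] at h1
      rw [show ((Int.castRingHom (ZMod 2)) : ℤ → ZMod 2) = (Int.cast : ℤ → ZMod 2) from rfl] at h1
      rw [h1, hadj]
    rw [← hpow]
    show ((((adjMat ℤ G) ^ (j:ℕ) *ᵥ fun _ => 1) i : ℤ) : ZMod 2)
        = ((((adjMat ℤ G) ^ (j:ℕ)).map (Int.cast : ℤ → ZMod 2)) *ᵥ fun _ => 1) i
    simp only [mulVec, dotProduct, map_apply]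
    push_cast
    rfl
  apply key_dvd
  rw [hmap]
  exact rank_bound A2 hn hsym hdiag
    (fun m hm => wcount_pos A2 hsym hdiag m hm)
    (wcount_zero A2)
    (fun a b => pair_eq_wcount A2 hsym a b)
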